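/- Let n ≥ 1 and let the extended affine Weyl group W̃ = ℤ^n ⋊ S_n of GL_n act on ℤ^n by (λ, σ)·v = λ + σ·v, where σ ∈ S_n permutes the coordinates of v. For every nonempty periodic subset I ⊆ ℤ, the componentwise action x·(v_i)_{i∈I} = (x·v_i)_{i∈I} carries faces of type I to faces of type I, and the resulting action of W̃ on the set of faces of type I is transitive. -/

import Mathlib

/-- A subset `I ⊆ ℤ` is periodic if `i ∈ I ↔ i + n ∈ I`. -/
def IsPeriodic (n : ℕ) (I : Set ℤ) : Prop := ∀ i : ℤ, i ∈ I ↔ i + n ∈ I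

/-- A family `(v_i)_{i ∈ I}` (given as a total function, with conditions only on `I`) is a
face of type `I`: `v_{i+n} = v_i + (1,…,1)`, `v_i ≤ v_j` componentwise for `i ≤ j` in `I`,
and `Σ(v_j) - Σ(v_i) = j - i` for `i, j ∈ I`. -/
def IsFace (n : ℕ) (I : Set ℤ) (v : ℤ → Fin n → ℤ) : Prop :=
  (∀ i ∈ I, ∀ t, v (i + n) t = v i t + 1) ∧
  (∀ i ∈ I, ∀ j ∈ I, i ≤ j → ∀ t, v i t ≤ v j t) ∧
  (∀ i ∈ I, ∀ j ∈ I, (∑ t, v j t) - (∑ t, v i t) = j - i)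

/-- The extended affine Weyl group `W̃ = ℤ^n ⋊ S_n` of `GL_n` acting on `ℤ^n` by affine
transformations `(λ, σ) · u = λ + σ · u`, where `(σ · u) t = u (σ⁻¹ t)` permutes the
coordinates of `u`. -/
def affAct (n : ℕ) (x : (Fin n → ℤ) × Equiv.Perm (Fin n)) (u : Fin n → ℤ) : Fin n → ℤ :=
  fun t => x.1 t + u (x.2⁻¹ t)

namespace FaceAux

/-- Membership in a periodic set is stable under adding integer multiples of `n`. -/
lemma mem_add_mul {n : ℕ} {I : Set ℤ} (hIper : IsPeriodic n I) {i : ℤ} (hi : i ∈ I) :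
    ∀ k : ℤ, i + k * n ∈ I := by
  intro k
  induction k using Int.induction_on with
  | zero => simpa using hi
  | succ k ih =>
      have h := (hIper (i + k * n)).1 ih
      have : i + (k + 1 : ℤ) * n = i + k * n + n := by ring
      rw [this]; exact h
  | pred k ih =>
      have h2 : i + (-(k : ℤ) - 1) * n + n = i + (-(k : ℤ)) * n := by ring
      have h := (hIper (i + (-(k : ℤ) - 1) * n)).2 (by rw [h2]; exact ih)
      have h3 : i + (-((k : ℤ) + 1)) * n = i + (-(k : ℤ) - 1) * n := by ring
      exact h3 ▸ h

open Classical in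
/-- The jump position of coordinate `t` of a face `v` within the period `(i0, i0+n]`. -/
noncomputable def jump (n : ℕ) (I : Set ℤ) (v : ℤ → Fin n → ℤ) (i0 : ℤ) (t : Fin n) : ℤ :=
  if h : ∃ k : ℕ, (i0 + 1 + (k : ℤ)) ∈ I ∧ (i0 + 1 + (k : ℤ)) ≤ i0 + n ∧
      v (i0 + 1 + (k : ℤ)) t = v i0 t + 1 then
    i0 + 1 + (Nat.find h : ℤ)
  else 0

variable {n : ℕ} {I : Set ℤ} {v w : ℤ → Fin n → ℤ} {i0 : ℤ}

lemma jump_exists (hIper : IsPeriodic n I) (hn : 1 ≤ n) (hi0 : i0 ∈ I)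
    (hv : IsFace n I v) (t : Fin n) :
    ∃ k : ℕ, (i0 + 1 + (k : ℤ)) ∈ I ∧ (i0 + 1 + (k : ℤ)) ≤ i0 + n ∧
      v (i0 + 1 + (k : ℤ)) t = v i0 t + 1 := by
  refine ⟨n - 1, ?_⟩
  have hcast : (i0 + 1 + ((n - 1 : ℕ) : ℤ)) = i0 + n := by
    have : ((n - 1 : ℕ) : ℤ) = (n : ℤ) - 1 := by
      have := Nat.cast_sub (R := ℤ) hn; simpa using this
    omega
  rw [hcast]
  exact ⟨(hIper i0).1 hi0, le_refl _, hv.1 i0 hi0 t⟩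

lemma jump_spec {t : Fin n}
    (hex : ∃ k : ℕ, (i0 + 1 + (k : ℤ)) ∈ I ∧ (i0 + 1 + (k : ℤ)) ≤ i0 + n ∧
      v (i0 + 1 + (k : ℤ)) t = v i0 t + 1) :
    jump n I v i0 t ∈ I ∧ i0 < jump n I v i0 t ∧ jump n I v i0 t ≤ i0 + n ∧
      v (jump n I v i0 t) t = v i0 t + 1 := by
  classical
  unfold jump
  rw [dif_pos hex]
  obtain ⟨h1, h2, h3⟩ := Nat.find_spec hex
  refine ⟨h1, by omega, h2, h3⟩

lemma jump_min {t : Fin n}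
    (hex : ∃ k : ℕ, (i0 + 1 + (k : ℤ)) ∈ I ∧ (i0 + 1 + (k : ℤ)) ≤ i0 + n ∧
      v (i0 + 1 + (k : ℤ)) t = v i0 t + 1)
    {j : ℤ} (hj : j ∈ I) (h1 : i0 < j) (h2 : j ≤ i0 + n) (h3 : v j t = v i0 t + 1) :
    jump n I v i0 t ≤ j := by
  classical
  unfold jump
  rw [dif_pos hex]
  have hk : j = i0 + 1 + ((j - i0 - 1).toNat : ℤ) := by omega
  have hfind : Nat.find hex ≤ (j - i0 - 1).toNat :=
    Nat.find_le ⟨by rw [← hk]; exact hj, by rw [← hk]; exact h2, by rw [← hk]; exact h3⟩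
  omega

/-- Key structure: on the fundamental period, a face is its base value plus a 0/1 jump. -/
lemma face_val (hIper : IsPeriodic n I) (hn : 1 ≤ n) (hi0 : i0 ∈ I) (hv : IsFace n I v)
    {i : ℤ} (hi : i ∈ I) (h1 : i0 ≤ i) (h2 : i ≤ i0 + n) (t : Fin n) :
    v i t = v i0 t + (if jump n I v i0 t ≤ i then 1 else 0) := by
  have hex := jump_exists hIper hn hi0 hv t
  obtain ⟨hJ, hJ1, hJ2, hJ3⟩ := jump_spec hex
  have hmono := hv.2.1
  have hin : i0 + n ∈ I := (hIper i0).1 hi0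
  have hupper : v i t ≤ v i0 t + 1 := by
    have ha := hmono i hi (i0 + n) hin h2 t
    have hb := hv.1 i0 hi0 t
    omega
  have hlower : v i0 t ≤ v i t := hmono i0 hi0 i hi h1 t
  by_cases hc : jump n I v i0 t ≤ i
  · have := hmono _ hJ _ hi hc t
    rw [hJ3] at this
    simp only [hc, if_true]
    omega
  · simp only [hc, if_false]
    by_contra hne
    have hval : v i t = v i0 t + 1 := by omega
    have hii0 : i0 < i := by
      rcases eq_or_lt_of_le h1 with h | h
      · exfalso; rw [← h] at hval; omega
      · exact h
    exact hc (jump_min hex hi hii0 h2 hval)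

/-- Counting: the number of coordinates jumping by position `c ∈ I ∩ [i0, i0+n]`. -/
lemma count_le (hIper : IsPeriodic n I) (hn : 1 ≤ n) (hi0 : i0 ∈ I) (hv : IsFace n I v)
    {c : ℤ} (hc : c ∈ I) (h1 : i0 ≤ c) (h2 : c ≤ i0 + n) :
    ((Finset.univ.filter (fun t => jump n I v i0 t ≤ c)).card : ℤ) = c - i0 := by
  classical
  have hsum := hv.2.2 i0 hi0 c hc
  have hval : ∀ t : Fin n, v c t = v i0 t + (if jump n I v i0 t ≤ c then 1 else 0) :=
    fun t => face_val hIper hn hi0 hv hc h1 h2 t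
  have : (∑ t : Fin n, ((if jump n I v i0 t ≤ c then (1 : ℤ) else 0))) = c - i0 := by
    calc (∑ t : Fin n, ((if jump n I v i0 t ≤ c then (1 : ℤ) else 0)))
        = (∑ t : Fin n, (v c t - v i0 t)) := by
          refine Finset.sum_congr rfl fun t _ => ?_
          rw [hval t]; ring
      _ = (∑ t, v c t) - (∑ t, v i0 t) := by rw [Finset.sum_sub_distrib]
      _ = c - i0 := hsum
  rw [← this]
  rw [Finset.sum_boole]

open Classical in
/-- The largest element of `I ∩ [i0, b-1]` (when `i0 ∈ I` and `i0 ≤ b - 1`). -/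
noncomputable def predI (I : Set ℤ) (i0 b : ℤ) : ℤ :=
  i0 + (Nat.findGreatest (fun k => (i0 + (k : ℤ)) ∈ I) (b - 1 - i0).toNat : ℤ)

lemma predI_mem (hi0 : i0 ∈ I) (b : ℤ) : predI I i0 b ∈ I := by
  classical
  exact Nat.findGreatest_spec (P := fun k => (i0 + (k : ℤ)) ∈ I) (m := 0)
    (Nat.zero_le _) (by simpa using hi0)

lemma predI_le (b : ℤ) (hb : i0 < b) : predI I i0 b ≤ b - 1 := by
  classical
  have h := Nat.findGreatest_le (P := fun k => (i0 + (k : ℤ)) ∈ I) (b - 1 - i0).toNat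
  unfold predI
  omega

lemma predI_ge (b : ℤ) : i0 ≤ predI I i0 b := by
  unfold predI; omega

lemma le_predI {j b : ℤ} (hj : j ∈ I) (h1 : i0 ≤ j) (h2 : j ≤ b - 1) : j ≤ predI I i0 b := by
  classical
  have hk : j = i0 + ((j - i0).toNat : ℤ) := by omega
  have h := Nat.le_findGreatest (P := fun k => (i0 + (k : ℤ)) ∈ I)
    (n := (b - 1 - i0).toNat) (m := (j - i0).toNat) (by omega)
    (show (i0 + ((j - i0).toNat : ℤ)) ∈ I by rw [← hk]; exact hj)
  unfold predI
  omega

/-- The fibers of the jump function have face-independent cardinality. -/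
lemma count_eq (hIper : IsPeriodic n I) (hn : 1 ≤ n) (hi0 : i0 ∈ I)
    (hv : IsFace n I v) (hw : IsFace n I w) (b : ℤ) :
    (Finset.univ.filter (fun t => jump n I v i0 t = b)).card =
      (Finset.univ.filter (fun t => jump n I w i0 t = b)).card := by
  classical
  by_cases hb : b ∈ I ∧ i0 < b ∧ b ≤ i0 + n
  · obtain ⟨hbI, hb1, hb2⟩ := hb
    set p := predI I i0 b with hp
    have hpmem : p ∈ I := predI_mem hi0 b
    have hple : p ≤ b - 1 := predI_le b hb1
    have hpge : i0 ≤ p := predI_ge b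
    -- generic computation for any face
    have main : ∀ u : ℤ → Fin n → ℤ, IsFace n I u →
        ((Finset.univ.filter (fun t => jump n I u i0 t = b)).card : ℤ) = b - p := by
      intro u hu
      have hcb : ((Finset.univ.filter (fun t => jump n I u i0 t ≤ b)).card : ℤ) = b - i0 :=
        count_le hIper hn hi0 hu hbI (le_of_lt hb1) hb2
      have hcp : ((Finset.univ.filter (fun t => jump n I u i0 t ≤ p)).card : ℤ) = p - i0 :=
        count_le hIper hn hi0 hu hpmem hpge (by omega)
      -- filter (≤ b-1) = filter (≤ p)
      have hfe : (Finset.univ.filter (fun t => jump n I u i0 t ≤ b - 1)) =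
          (Finset.univ.filter (fun t => jump n I u i0 t ≤ p)) := by
        apply Finset.filter_congr
        intro t _
        have hex := jump_exists hIper hn hi0 hu t
        obtain ⟨hJ, hJ1, _, _⟩ := jump_spec hex
        constructor
        · intro h; exact le_predI hJ (le_of_lt hJ1) h
        · intro h; omega
      -- split filter (≤ b) into (= b) ∪ (≤ b - 1)
      have hsplit : (Finset.univ.filter (fun t => jump n I u i0 t ≤ b)) =
          (Finset.univ.filter (fun t => jump n I u i0 t = b)) ∪
          (Finset.univ.filter (fun t => jump n I u i0 t ≤ b - 1)) := by
        rw [← Finset.filter_or]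
        apply Finset.filter_congr
        intro t _
        constructor
        · intro h; omega
        · intro h; omega
      have hdisj : Disjoint (Finset.univ.filter (fun t => jump n I u i0 t = b))
          (Finset.univ.filter (fun t => jump n I u i0 t ≤ b - 1)) := by
        rw [Finset.disjoint_filter]
        intro t _ h1 h2
        omega
      have hcard := Finset.card_union_of_disjoint hdisj
      rw [← hsplit] at hcard
      rw [hfe] at hcard
      have : ((Finset.univ.filter (fun t => jump n I u i0 t ≤ b)).card : ℤ) =
          ((Finset.univ.filter (fun t => jump n I u i0 t = b)).card : ℤ) +
          ((Finset.univ.filter (fun t => jump n I u i0 t ≤ p)).card : ℤ) := by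
        exact_mod_cast congrArg (Nat.cast : ℕ → ℤ) hcard
      omega
    have h1 := main v hv
    have h2 := main w hw
    omega
  · -- both fibers empty
    have empty : ∀ u : ℤ → Fin n → ℤ, IsFace n I u →
        (Finset.univ.filter (fun t => jump n I u i0 t = b)) = ∅ := by
      intro u hu
      apply Finset.filter_false_of_mem
      intro t _
      have hex := jump_exists hIper hn hi0 hu t
      obtain ⟨hJ, hJ1, hJ2, _⟩ := jump_spec hex
      intro h
      rw [h] at hJ hJ1 hJ2
      exact hb ⟨hJ, hJ1, hJ2⟩
    rw [empty v hv, empty w hw]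

lemma card_fiber (hIper : IsPeriodic n I) (hn : 1 ≤ n) (hi0 : i0 ∈ I)
    (hv : IsFace n I v) (hw : IsFace n I w) (b : ℤ) :
    Fintype.card {t // jump n I v i0 t = b} = Fintype.card {t // jump n I w i0 t = b} := by
  classical
  simpa [Fintype.card_subtype] using count_eq hIper hn hi0 hv hw b

open Classical in
/-- A permutation matching the jump functions of two faces. -/
noncomputable def matchPerm (hIper : IsPeriodic n I) (hn : 1 ≤ n) (hi0 : i0 ∈ I)
    (hv : IsFace n I v) (hw : IsFace n I w) : Equiv.Perm (Fin n) :=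
  (Equiv.sigmaFiberEquiv (jump n I v i0)).symm.trans
    ((Equiv.sigmaCongrRight
        (fun b => Fintype.equivOfCardEq (card_fiber hIper hn hi0 hv hw b))).trans
      (Equiv.sigmaFiberEquiv (jump n I w i0)))

lemma matchPerm_spec (hIper : IsPeriodic n I) (hn : 1 ≤ n) (hi0 : i0 ∈ I)
    (hv : IsFace n I v) (hw : IsFace n I w) (t : Fin n) :
    jump n I w i0 (matchPerm hIper hn hi0 hv hw t) = jump n I v i0 t := by
  classical
  have h : matchPerm hIper hn hi0 hv hw t =
      ((Fintype.equivOfCardEq (card_fiber hIper hn hi0 hv hw (jump n I v i0 t)))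
        ⟨t, rfl⟩ : {t' // jump n I w i0 t' = jump n I v i0 t}).1 := rfl
  rw [h]
  exact ((Fintype.equivOfCardEq (card_fiber hIper hn hi0 hv hw (jump n I v i0 t)))
    ⟨t, rfl⟩).2

/-- A face shifts by `k` when its index is shifted by `k·n`. -/
lemma face_shift (hIper : IsPeriodic n I) (hv : IsFace n I v) {i : ℤ} (hi : i ∈ I)
    (k : ℤ) (t : Fin n) : v (i + k * n) t = v i t + k := by
  induction k using Int.induction_on with
  | zero => simp
  | succ k ih =>
      have hm : i + (k : ℤ) * n ∈ I := mem_add_mul hIper hi k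
      have h := hv.1 _ hm t
      have he : i + ((k : ℤ) + 1) * n = (i + (k : ℤ) * n) + n := by ring
      rw [he, h, ih]; ring
  | pred k ih =>
      have hm : i + (-(k : ℤ) - 1) * n ∈ I := mem_add_mul hIper hi _
      have h := hv.1 _ hm t
      have he : i + (-(k : ℤ) - 1) * n + n = i + (-(k : ℤ)) * n := by ring
      rw [he] at h
      linarith [h, ih]

end FaceAux

/-- **The extended affine Weyl group acts transitively on faces of type `I`.** For every
nonempty periodic `I ⊆ ℤ`, the componentwise action of `W̃ = ℤ^n ⋊ S_n` carries faces of
type `I` to faces of type `I`, and any two faces of type `I` are in the same orbit. -/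
theorem affine_weyl_transitive_on_faces (n : ℕ) (hn : 1 ≤ n)
    (I : Set ℤ) (hIper : IsPeriodic n I) (hIne : I.Nonempty) :
    (∀ (x : (Fin n → ℤ) × Equiv.Perm (Fin n)) (v : ℤ → Fin n → ℤ),
      IsFace n I v → IsFace n I (fun i => affAct n x (v i))) ∧
    (∀ v w : ℤ → Fin n → ℤ, IsFace n I v → IsFace n I w →
      ∃ x : (Fin n → ℤ) × Equiv.Perm (Fin n), ∀ i ∈ I, affAct n x (v i) = w i) := by
  classical
  constructor
  · rintro x v ⟨h1, h2, h3⟩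
    refine ⟨?_, ?_, ?_⟩
    · intro i hi t
      simp only [affAct]
      rw [h1 i hi]
      ring
    · intro i hi j hj hij t
      simp only [affAct]
      have := h2 i hi j hj hij (x.2⁻¹ t)
      omega
    · intro i hi j hj
      simp only [affAct]
      rw [Finset.sum_add_distrib, Finset.sum_add_distrib]
      have hv' : ∀ u : ℤ, (∑ t, v u (x.2⁻¹ t)) = ∑ t, v u t := fun u =>
        Equiv.sum_comp x.2⁻¹ (v u)
      rw [hv', hv']
      have := h3 i hi j hj
      omega
  · intro v w hv hw
    obtain ⟨i0, hi0⟩ := hIne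
    set π := FaceAux.matchPerm hIper hn hi0 hv hw with hπ
    refine ⟨⟨fun t => w i0 t - v i0 (π⁻¹ t), π⟩, ?_⟩
    intro i hi
    funext t
    show (w i0 t - v i0 (π⁻¹ t)) + v i (π⁻¹ t) = w i t
    set k : ℤ := -((i - i0) / n) with hk
    have hn0 : (0 : ℤ) < n := by exact_mod_cast hn
    have hr1 : 0 ≤ (i - i0) % n := Int.emod_nonneg _ (by omega)
    have hr2 : (i - i0) % n < n := Int.emod_lt_of_pos _ hn0
    have hmd := Int.emod_add_mul_ediv (i - i0) n
    have hid : i + k * n = i0 + (i - i0) % n := by rw [hk]; linarith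
    have hi' : i + k * n ∈ I := FaceAux.mem_add_mul hIper hi k
    have hb1 : i0 ≤ i + k * n := by omega
    have hb2 : i + k * n ≤ i0 + n := by omega
    have hwv : w (i + k * n) t - v (i + k * n) (π⁻¹ t) = w i0 t - v i0 (π⁻¹ t) := by
      rw [FaceAux.face_val hIper hn hi0 hw hi' hb1 hb2 t,
          FaceAux.face_val hIper hn hi0 hv hi' hb1 hb2 (π⁻¹ t)]
      have hj : FaceAux.jump n I v i0 (π⁻¹ t) = FaceAux.jump n I w i0 t := by
        have h := FaceAux.matchPerm_spec hIper hn hi0 hv hw (π⁻¹ t)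
        rw [← hπ, show π (π⁻¹ t) = t from π.apply_symm_apply t] at h
        exact h.symm
      rw [hj]
      ring
    have hsv := FaceAux.face_shift hIper hv hi k (π⁻¹ t)
    have hsw := FaceAux.face_shift hIper hw hi k t
    omega
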